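/- arXiv:1409.4697 — 2 statements merged into one kernel-verified Lean document; each statement's English description precedes it below -/
import Mathlib

section
/- For every n ≥ 0 and c real with c ≠ 0, -1, -2, ..., the limit lim_{a→1} (a-1)^n m_n^{a,c}(x/(1-a)) = L_n^{c-1}(x) holds uniformly on compact subsets, where L_n^α is the Laguerre polynomial. -/
/-- The generalized binomial coefficient `binom(y, j) = y(y-1)⋯(y-j+1)/j!` for real `y`. -/
noncomputable def gbinom (y : ℝ) (j : ℕ) : ℝ :=
  (∏ i ∈ Finset.range j, (y - (i : ℝ))) / (j.factorial : ℝ)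

/-- The Meixner polynomial
`m_n^{a,c}(x) = (a/(1-a))^n ∑_{j=0}^n a^{-j} binom(x,j) binom(-x-c, n-j)`. -/
noncomputable def meixnerFn (a c : ℝ) (n : ℕ) (x : ℝ) : ℝ :=
  (a / (1 - a)) ^ n *
    ∑ j ∈ Finset.range (n + 1), a ^ (-(j : ℤ)) * gbinom x j * gbinom (-x - c) (n - j)

/-- The Laguerre polynomial `L_n^α(x) = ∑_{j=0}^n ((-x)^j/j!) binom(n+α, n-j)`. -/
noncomputable def laguerreFn (α : ℝ) (n : ℕ) (x : ℝ) : ℝ :=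
  ∑ j ∈ Finset.range (n + 1), (-x) ^ j / (j.factorial : ℝ) * gbinom ((n : ℝ) + α) (n - j)

open Finset in
lemma gbinom_prod (y : ℝ) (j : ℕ) :
    (∏ i ∈ Finset.range j, (y - (i : ℝ))) = (descPochhammer ℤ j).smeval y := by
  induction j with
  | zero => simp [descPochhammer_zero, Polynomial.smeval_one]
  | succ m ih =>
      rw [Finset.prod_range_succ, ih, descPochhammer_succ_right, Polynomial.smeval_mul]
      simp [Polynomial.smeval_sub, Polynomial.smeval_X, Polynomial.smeval_natCast]

lemma gbinom_eq_choose (y : ℝ) (j : ℕ) : gbinom y j = Ring.choose y j := by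
  have h := Ring.descPochhammer_eq_factorial_smul_choose y j
  rw [gbinom, gbinom_prod, h, nsmul_eq_mul]
  field_simp

lemma gbinom_vandermonde (s t : ℝ) (M : ℕ) :
    ∑ m ∈ Finset.range (M + 1), gbinom s m * gbinom t (M - m) = gbinom (s + t) M := by
  simp only [gbinom_eq_choose]
  rw [Ring.add_choose_eq M (Commute.all s t), Finset.Nat.sum_antidiagonal_eq_sum_range_succ_mk]

lemma gbinom_trinomial {k j : ℕ} (h : k ≤ j) (y : ℝ) :
    gbinom y j * (j.choose k : ℝ) = gbinom y k * gbinom (y - k) (j - k) := by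
  obtain ⟨d, rfl⟩ := Nat.exists_eq_add_of_le h
  have hprod : (∏ i ∈ Finset.range (k + d), (y - (i : ℝ)))
      = (∏ i ∈ Finset.range k, (y - (i : ℝ))) * ∏ i ∈ Finset.range d, (y - (k : ℝ) - (i : ℝ)) := by
    rw [Finset.prod_range_add]
    congr 1
    refine Finset.prod_congr rfl fun i _ => ?_
    push_cast; ring
  have hfac : ((k + d).choose k : ℝ) * (k.factorial : ℝ) * (d.factorial : ℝ)
      = ((k + d).factorial : ℝ) := by
    have := Nat.choose_mul_factorial_mul_factorial (Nat.le_add_right k d)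
    rw [Nat.add_sub_cancel_left] at this
    exact_mod_cast congrArg (Nat.cast : ℕ → ℝ) this
  have h1 : (k.factorial : ℝ) ≠ 0 := Nat.cast_ne_zero.2 k.factorial_ne_zero
  have h2 : (d.factorial : ℝ) ≠ 0 := Nat.cast_ne_zero.2 d.factorial_ne_zero
  have h3 : ((k + d).factorial : ℝ) ≠ 0 := Nat.cast_ne_zero.2 (k + d).factorial_ne_zero
  simp only [gbinom, Nat.add_sub_cancel_left, hprod]
  field_simp
  rw [← hfac]; ring

lemma key_identity (n : ℕ) (a y c : ℝ) (ha : a ≠ 0) :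
    ∑ j ∈ Finset.range (n + 1), (a⁻¹) ^ j * gbinom y j * gbinom (-y - c) (n - j)
      = ∑ k ∈ Finset.range (n + 1), (a⁻¹ - 1) ^ k * gbinom y k * gbinom (-c - k) (n - k) := by
  have hbin : ∀ j : ℕ, (a⁻¹) ^ j = ∑ k ∈ Finset.range (j + 1),
      (a⁻¹ - 1) ^ k * (j.choose k : ℝ) := by
    intro j
    have := add_pow (a⁻¹ - 1) 1 j
    simp only [one_pow, mul_one, sub_add_cancel] at this
    rw [this]
  calc
    ∑ j ∈ Finset.range (n + 1), (a⁻¹) ^ j * gbinom y j * gbinom (-y - c) (n - j)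
        = ∑ j ∈ Finset.range (n + 1), ∑ k ∈ Finset.range (j + 1),
            (a⁻¹ - 1) ^ k * ((j.choose k : ℝ) * gbinom y j * gbinom (-y - c) (n - j)) := by
          refine Finset.sum_congr rfl fun j _ => ?_
          rw [hbin j, Finset.sum_mul, Finset.sum_mul]
          exact Finset.sum_congr rfl fun k _ => by ring
    _ = ∑ k ∈ Finset.range (n + 1), ∑ j ∈ Finset.Icc k n,
            (a⁻¹ - 1) ^ k * ((j.choose k : ℝ) * gbinom y j * gbinom (-y - c) (n - j)) := by
          refine Finset.sum_comm' ?_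
          intro j k
          simp only [Finset.mem_range, Finset.mem_Icc]
          omega
    _ = ∑ k ∈ Finset.range (n + 1), (a⁻¹ - 1) ^ k * gbinom y k *
            ∑ j ∈ Finset.Icc k n, gbinom (y - k) (j - k) * gbinom (-y - c) (n - j) := by
          refine Finset.sum_congr rfl fun k hk => ?_
          rw [Finset.mul_sum]
          refine Finset.sum_congr rfl fun j hj => ?_
          rw [Finset.mem_Icc] at hj
          have := gbinom_trinomial hj.1 y
          calc (a⁻¹ - 1) ^ k * ((j.choose k : ℝ) * gbinom y j * gbinom (-y - c) (n - j))
              = (a⁻¹ - 1) ^ k * ((gbinom y j * (j.choose k : ℝ)) * gbinom (-y - c) (n - j)) := by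
                ring
            _ = (a⁻¹ - 1) ^ k * gbinom y k * (gbinom (y - k) (j - k) * gbinom (-y - c) (n - j)) := by
                rw [this]; ring
    _ = ∑ k ∈ Finset.range (n + 1), (a⁻¹ - 1) ^ k * gbinom y k * gbinom (-c - k) (n - k) := by
          refine Finset.sum_congr rfl fun k hk => ?_
          rw [Finset.mem_range] at hk
          have hk' : k ≤ n := Nat.lt_succ_iff.mp hk
          congr 1
          have hIcc : Finset.Icc k n = Finset.Ico k (n + 1) := rfl
          rw [hIcc, Finset.sum_Ico_eq_sum_range]
          have hcount : n + 1 - k = (n - k) + 1 := by omega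
          rw [hcount]
          have : ∀ m ∈ Finset.range ((n - k) + 1),
              gbinom (y - k) (k + m - k) * gbinom (-y - c) (n - (k + m))
                = gbinom (y - k) m * gbinom (-y - c) ((n - k) - m) := by
            intro m hm
            rw [Finset.mem_range] at hm
            congr 2 <;> omega
          rw [Finset.sum_congr rfl this, gbinom_vandermonde]
          congr 1
          ring

noncomputable def Gfun (c : ℝ) (n : ℕ) (p : ℝ × ℝ) : ℝ :=
  ∑ k ∈ Finset.range (n + 1),
    (-1 : ℝ) ^ k * p.1 ^ (n - k) * (∏ i ∈ Finset.range k, (p.2 - (i : ℝ) * (1 - p.1)))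
      / (k.factorial : ℝ) * gbinom ((n : ℝ) + c - 1) (n - k)

lemma gbinom_scaled {a : ℝ} (ha : a ≠ 1) (x : ℝ) (k : ℕ) :
    gbinom (x / (1 - a)) k
      = (∏ i ∈ Finset.range k, (x - (i : ℝ) * (1 - a))) / ((1 - a) ^ k * (k.factorial : ℝ)) := by
  have hu : (1 : ℝ) - a ≠ 0 := sub_ne_zero.2 (Ne.symm ha)
  have : ∀ i : ℕ, x / (1 - a) - (i : ℝ) = (x - (i : ℝ) * (1 - a)) / (1 - a) := by
    intro i; field_simp
  rw [gbinom]
  rw [Finset.prod_congr rfl fun i _ => this i, Finset.prod_div_distrib, Finset.prod_const,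
    Finset.card_range, div_div]

lemma gbinom_neg_reflect (c : ℝ) (n k : ℕ) (hk : k ≤ n) :
    gbinom (-c - k) (n - k) = (-1) ^ (n - k) * gbinom ((n : ℝ) + c - 1) (n - k) := by
  set m := n - k with hm
  have hnm : (n : ℝ) = (m : ℝ) + (k : ℝ) := by
    rw [hm]; push_cast [Nat.cast_sub hk]; ring
  rw [gbinom, gbinom]
  have h1 : (∏ i ∈ Finset.range m, (-c - (k : ℝ) - (i : ℝ)))
      = (-1) ^ m * ∏ i ∈ Finset.range m, (c + (k : ℝ) + (i : ℝ)) := by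
    have hh : ∀ i ∈ Finset.range m, (-c - (k : ℝ) - (i : ℝ)) = (-1) * (c + (k : ℝ) + (i : ℝ)) :=
      fun i _ => by ring
    rw [Finset.prod_congr rfl hh, Finset.prod_mul_distrib, Finset.prod_const, Finset.card_range]
  have h2 : (∏ i ∈ Finset.range m, ((n : ℝ) + c - 1 - (i : ℝ)))
      = ∏ i ∈ Finset.range m, (c + (k : ℝ) + (i : ℝ)) := by
    rw [← Finset.prod_range_reflect]
    refine Finset.prod_congr rfl fun i hi => ?_
    rw [Finset.mem_range] at hi
    have hcast : ((m - 1 - i : ℕ) : ℝ) = (m : ℝ) - 1 - (i : ℝ) := by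
      have h5 : (m - 1 - i) + (i + 1) = m := by omega
      have h6 : (((m - 1 - i) + (i + 1) : ℕ) : ℝ) = (m : ℝ) := by rw [h5]
      push_cast at h6
      linarith
    rw [hcast, hnm]
    ring
  have h3 : -c - (k : ℝ) = -c - k := rfl
  rw [show (-c - (k : ℝ) : ℝ) = -c - (k : ℝ) from rfl] at *
  rw [show (∏ i ∈ Finset.range m, (-c - (k : ℝ) - (i : ℝ))) = (-1) ^ m * ∏ i ∈ Finset.range m, (c + (k : ℝ) + (i : ℝ)) from h1, h2]
  ring

lemma main_identity (n : ℕ) (c : ℝ) {a : ℝ} (ha0 : a ≠ 0) (ha1 : a ≠ 1) (x : ℝ) :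
    (a - 1) ^ n * meixnerFn a c n (x / (1 - a)) = Gfun c n (a, x) := by
  have hu : (1 : ℝ) - a ≠ 0 := sub_ne_zero.2 (Ne.symm ha1)
  have hz : ∀ j : ℕ, a ^ (-(j : ℤ)) = (a⁻¹) ^ j := by
    intro j
    rw [zpow_neg, zpow_natCast, inv_pow]
  rw [meixnerFn]
  rw [Finset.sum_congr rfl fun j _ => by rw [hz j]]
  rw [key_identity n a (x / (1 - a)) c ha0]
  rw [Gfun, ← mul_assoc, Finset.mul_sum]
  refine Finset.sum_congr rfl fun k hk => ?_
  rw [Finset.mem_range] at hk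
  have hk' : k ≤ n := Nat.lt_succ_iff.mp hk
  rw [gbinom_scaled ha1 x k, gbinom_neg_reflect c n k hk']
  have hsc : (a - 1) ^ n * (a / (1 - a)) ^ n = (-a) ^ n := by
    rw [← mul_pow]
    congr 1
    field_simp
    ring
  rw [hsc]
  have hfac : (k.factorial : ℝ) ≠ 0 := Nat.cast_ne_zero.2 k.factorial_ne_zero
  have hinv : a⁻¹ - 1 = (1 - a) / a := by field_simp
  rw [hinv]
  have hpow : a ^ (n - k) = a ^ n / a ^ k := by
    rw [eq_div_iff (pow_ne_zero k ha0), ← pow_add]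
    congr 1; omega
  rw [hpow]
  have hupow : (1 - a) ^ k ≠ 0 := pow_ne_zero k hu
  have hapow : (a : ℝ) ^ k ≠ 0 := pow_ne_zero k ha0
  have hsign : (-1 : ℝ) ^ n * (-1 : ℝ) ^ (n - k) = (-1 : ℝ) ^ k := by
    rw [← pow_add]
    have h2 : n + (n - k) = 2 * (n - k) + k := by omega
    rw [h2, pow_add, pow_mul]
    simp
  rw [neg_pow, div_pow, ← hsign]
  field_simp

lemma Gfun_continuous (c : ℝ) (n : ℕ) : Continuous (Gfun c n) := by
  unfold Gfun
  refine continuous_finset_sum _ fun k _ => ?_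
  refine Continuous.mul ?_ continuous_const
  refine Continuous.div_const ?_ _
  refine Continuous.mul ?_ ?_
  · exact (continuous_const.mul (continuous_fst.pow _))
  · exact continuous_finset_prod _ fun i _ =>
      continuous_snd.sub (continuous_const.mul (continuous_const.sub continuous_fst))

lemma Gfun_one (c : ℝ) (n : ℕ) (x : ℝ) : Gfun c n (1, x) = laguerreFn (c - 1) n x := by
  unfold Gfun laguerreFn
  refine Finset.sum_congr rfl fun k _ => ?_
  simp only [sub_self, mul_zero, sub_zero, Finset.prod_const, Finset.card_range, one_pow, mul_one]
  rw [show (n : ℝ) + (c - 1) = (n : ℝ) + c - 1 by ring]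
  rw [neg_pow]
  ring

theorem meixner_to_laguerre_limit (n : ℕ) (c : ℝ) (hc : ∀ k : ℕ, c ≠ -(k : ℝ))
    (K : Set ℝ) (hK : IsCompact K) :
    TendstoUniformlyOn
      (fun (a : ℝ) (x : ℝ) => (a - 1) ^ n * meixnerFn a c n (x / (1 - a)))
      (fun x => laguerreFn (c - 1) n x)
      (nhdsWithin (1 : ℝ) {(1 : ℝ)}ᶜ) K := by
  -- uniform convergence of G
  have hcomp : IsCompact ((Set.Icc (0 : ℝ) 2) ×ˢ K) := isCompact_Icc.prod hK
  have hcont : ContinuousOn (Gfun c n) ((Set.Icc (0 : ℝ) 2) ×ˢ K) :=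
    (Gfun_continuous c n).continuousOn
  have hunif : UniformContinuousOn (Gfun c n) ((Set.Icc (0 : ℝ) 2) ×ˢ K) :=
    hcomp.uniformContinuousOn_of_continuous hcont
  have hF : UniformContinuousOn (↿(fun a x => Gfun c n (a, x)))
      ((Set.Icc (0 : ℝ) 2) ×ˢ K) := by
    convert hunif using 1
    funext p; rfl
  have h1 : TendstoUniformlyOn (fun a x => Gfun c n (a, x)) (fun x => Gfun c n (1, x))
      (nhdsWithin 1 (Set.Icc (0 : ℝ) 2)) K :=
    UniformContinuousOn.tendstoUniformlyOn hF (by norm_num : (1 : ℝ) ∈ Set.Icc (0:ℝ) 2)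
  -- filter inequality
  have hle : nhdsWithin (1 : ℝ) {(1 : ℝ)}ᶜ ≤ nhdsWithin (1 : ℝ) (Set.Icc (0 : ℝ) 2) := by
    rw [nhdsWithin_le_iff]
    exact mem_nhdsWithin_of_mem_nhds (Icc_mem_nhds (by norm_num) (by norm_num))
  have h2 : TendstoUniformlyOn (fun a x => Gfun c n (a, x)) (fun x => Gfun c n (1, x))
      (nhdsWithin (1 : ℝ) {(1 : ℝ)}ᶜ) K := by
    intro u hu
    exact ((h1 u hu).filter_mono hle)
  -- replace limit function
  have h3 : TendstoUniformlyOn (fun a x => Gfun c n (a, x)) (fun x => laguerreFn (c - 1) n x)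
      (nhdsWithin (1 : ℝ) {(1 : ℝ)}ᶜ) K := by
    have : (fun x => Gfun c n (1, x)) = (fun x => laguerreFn (c - 1) n x) := by
      funext x; exact Gfun_one c n x
    rwa [this] at h2
  -- replace approximating functions using eventual equality
  refine h3.congr ?_
  have hev : {a : ℝ | a ≠ 0 ∧ a ≠ 1} ∈ nhdsWithin (1 : ℝ) {(1 : ℝ)}ᶜ := by
    have hne : {a : ℝ | a ≠ 1} ∈ nhdsWithin (1 : ℝ) {(1 : ℝ)}ᶜ := self_mem_nhdsWithin
    have hnz : {a : ℝ | a ≠ 0} ∈ nhdsWithin (1 : ℝ) {(1 : ℝ)}ᶜ :=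
      mem_nhdsWithin_of_mem_nhds (by
        have : Set.Ioi (0 : ℝ) ∈ nhds (1 : ℝ) := Ioi_mem_nhds (by norm_num)
        exact Filter.mem_of_superset this fun y hy => ne_of_gt hy)
    filter_upwards [hne, hnz] with a h1' h2'
    exact ⟨h2', h1'⟩
  filter_upwards [hev] with a ha
  intro x _
  exact (main_identity n c ha.1 ha.2 x).symm
end

section
/- For the pair F = (F_1, F_2) with F_1 = {1,2}, F_2 = ∅, the exceptional Laguerre polynomials L_n^{α;F} satisfy for all n ≥ 0 the seven-term recurrence Σ_{j=-3}^{3} A_j(n) L_{n+j}^{α;F}(x) = [x(x^2 - 3x(α+1) + 3(α+1)(α+2))/6] L_n^{α;F}(x), where A_{-3}(n) = -(n+α)(n+α-1)(n+α-2)/6, A_{-2}(n) = (n+α)(n+α-1)(n-2), A_{-1}(n) = -(n+α)(5n+α-9)(n-1)/2, A_0(n) = 10n^3/3 - (8-2α)n^2 - (4α - 8/3)n + α^3/6 + α^2 + 11α/6 + 1, A_1(n) = -(5n+α-4)(n+1)(n-2)/2, A_2(n) = (n-1)(n^2-4), A_3(n) = -(n+3)(n-1)(n-2)/6. -/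
open Polynomial

/-- The Laguerre polynomial `L_n^α` as a polynomial in `x`. -/
noncomputable def laguerreP (α : ℝ) (n : ℕ) : Polynomial ℝ :=
  ∑ j ∈ Finset.range (n + 1),
    Polynomial.C ((-1 : ℝ) ^ j / (j.factorial : ℝ) * gbinom ((n : ℝ) + α) (n - j)) * X ^ j

/-- Laguerre polynomial with integer index; zero for negative index. -/
noncomputable def laguerreZ (α : ℝ) (m : ℤ) : Polynomial ℝ :=
  if m < 0 then 0 else laguerreP α m.toNat


/-- The exceptional Laguerre polynomial `L_n^{α;F}` for `F = ({1,2}, ∅)`, evaluated at `x`: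
a `3×3` Wronskian determinant. -/
noncomputable def excLag12 (α : ℝ) (m : ℤ) (x : ℝ) : ℝ :=
  Matrix.det
    !![(laguerreZ α m).eval x, (derivative (laguerreZ α m)).eval x,
         (derivative (derivative (laguerreZ α m))).eval x;
       (laguerreP α 1).eval x, (derivative (laguerreP α 1)).eval x,
         (derivative (derivative (laguerreP α 1))).eval x;
       (laguerreP α 2).eval x, (derivative (laguerreP α 2)).eval x,
         (derivative (derivative (laguerreP α 2))).eval x]

lemma gbinom_zero (y : ℝ) : gbinom y 0 = 1 := by simp [gbinom]

lemma gbinom_one (y : ℝ) : gbinom y 1 = y := by simp [gbinom]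

lemma prod_shift (y : ℝ) (k : ℕ) :
    ∏ i ∈ Finset.range (k+1), (y - (i : ℝ)) = y * ∏ i ∈ Finset.range k, (y - 1 - (i : ℝ)) := by
  rw [Finset.prod_range_succ']
  rw [mul_comm]
  congr 1
  · push_cast; ring
  · apply Finset.prod_congr rfl
    intro i _
    push_cast; ring

lemma gbinom_succ (y : ℝ) (k : ℕ) :
    ((k : ℝ) + 1) * gbinom y (k+1) = y * gbinom (y - 1) k := by
  unfold gbinom
  rw [prod_shift, Nat.factorial_succ]
  push_cast
  have h1 : ((k : ℝ)+1) ≠ 0 := by positivity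
  have h2 : ((Nat.factorial k : ℝ)) ≠ 0 := by exact_mod_cast Nat.factorial_ne_zero k
  field_simp

lemma gbinom_pascal (y : ℝ) (k : ℕ) :
    gbinom y (k+1) = gbinom (y-1) (k+1) + gbinom (y-1) k := by
  unfold gbinom
  rw [prod_shift, Finset.prod_range_succ, Nat.factorial_succ]
  have h1 : ((k : ℝ)+1) ≠ 0 := by positivity
  have h2 : ((Nat.factorial k : ℝ)) ≠ 0 := by exact_mod_cast Nat.factorial_ne_zero k
  push_cast
  field_simp
  ring

lemma gbinom_pascal' (y : ℝ) (k : ℕ) :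
    gbinom (y+1) (k+1) = gbinom y (k+1) + gbinom y k := by
  have h := gbinom_pascal (y+1) k
  simpa using h

lemma gbinom_succ' (y : ℝ) (k : ℕ) :
    ((k : ℝ) + 1) * gbinom (y+1) (k+1) = (y+1) * gbinom y k := by
  have h := gbinom_succ (y+1) k
  simpa using h

lemma coeff_laguerreP (α : ℝ) (n j : ℕ) :
    (laguerreP α n).coeff j =
      if j ≤ n then (-1 : ℝ) ^ j / (j.factorial : ℝ) * gbinom ((n : ℝ) + α) (n - j) else 0 := by
  unfold laguerreP
  rw [finset_sum_coeff]
  simp only [coeff_C_mul, coeff_X_pow, mul_ite, mul_one, mul_zero,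
    Finset.sum_ite_eq, Finset.mem_range]
  split_ifs with h1 h2 h2 <;> first | rfl | omega

lemma recB_nat (α : ℝ) (n : ℕ) :
    derivative (laguerreP α (n+1)) = derivative (laguerreP α n) - laguerreP α n := by
  ext j
  rw [coeff_derivative, coeff_sub, coeff_derivative, coeff_laguerreP, coeff_laguerreP,
    coeff_laguerreP]
  have hfj : ((j+1).factorial : ℝ) = ((j:ℝ)+1) * (j.factorial : ℝ) := by
    rw [Nat.factorial_succ]; push_cast; ring
  have h1 : ((j : ℝ)+1) ≠ 0 := by positivity
  have h2 : ((Nat.factorial j : ℝ)) ≠ 0 := by exact_mod_cast Nat.factorial_ne_zero j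
  rcases lt_trichotomy j n with h | h | h
  · rw [if_pos (by omega), if_pos (by omega), if_pos (by omega)]
    obtain ⟨k, hk⟩ : ∃ k, n = j + 1 + k := ⟨n - (j+1), by omega⟩
    subst hk
    have hs1 : j + 1 + k + 1 - (j+1) = k+1 := by omega
    have hs2 : j + 1 + k - (j+1) = k := by omega
    have hs3 : j + 1 + k - j = k+1 := by omega
    rw [hs1, hs2, hs3]
    have e1 : ((j + 1 + k + 1 : ℕ) : ℝ) + α = (((j + 1 + k : ℕ) : ℝ) + α) + 1 := by
      push_cast; ring
    rw [e1, gbinom_pascal' (((j + 1 + k : ℕ) : ℝ) + α) k, hfj, pow_succ]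
    field_simp
    ring
  · subst h
    rw [if_pos (by omega), if_neg (by omega), if_pos (by omega)]
    have hs1 : j + 1 - (j+1) = 0 := by omega
    have hs3 : j - j = 0 := by omega
    rw [hs1, hs3, gbinom_zero, gbinom_zero, hfj, pow_succ]
    field_simp
    ring
  · rw [if_neg (by omega), if_neg (by omega), if_neg (by omega)]
    ring

lemma recA_nat (α : ℝ) (n : ℕ) :
    C (((n:ℝ)+1) + 1) * laguerreP α (n+2) =
      (C (2*((n:ℝ)+1) + 1 + α) - X) * laguerreP α (n+1) - C (((n:ℝ)+1) + α) * laguerreP α n := by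
  ext j
  rw [coeff_sub, coeff_C_mul, coeff_C_mul, sub_mul, coeff_sub, coeff_C_mul]
  cases j with
  | zero =>
    rw [mul_coeff_zero, coeff_X_zero, zero_mul]
    rw [coeff_laguerreP, coeff_laguerreP, coeff_laguerreP]
    rw [if_pos (by omega), if_pos (by omega), if_pos (by omega)]
    simp only [Nat.sub_zero, Nat.factorial_zero, pow_zero, Nat.cast_one]
    obtain ⟨y, hy⟩ : ∃ y : ℝ, y = ((n : ℕ) : ℝ) + α := ⟨_, rfl⟩
    have e2 : ((n + 2 : ℕ) : ℝ) + α = y + 1 + 1 := by rw [hy]; push_cast; ring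
    have e1 : ((n + 1 : ℕ) : ℝ) + α = y + 1 := by rw [hy]; push_cast; ring
    rw [e1, e2, ← hy]
    have hp1 := gbinom_pascal' (y + 1) (n+1)
    have hp2 := gbinom_pascal' y n
    have hs := gbinom_succ' y (n+1)
    push_cast at hp1 hp2 hs hy ⊢
    linear_combination ((n:ℝ)+2) * hp1 - ((n:ℝ)+1+α) * hp2 + hs + (gbinom y (n+1)) * hy
  | succ i =>
    rw [coeff_X_mul, coeff_laguerreP, coeff_laguerreP, coeff_laguerreP, coeff_laguerreP]
    have hfi : ((i+1).factorial : ℝ) = ((i:ℝ)+1) * (i.factorial : ℝ) := by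
      rw [Nat.factorial_succ]; push_cast; ring
    have h1 : ((i : ℝ)+1) ≠ 0 := by positivity
    have h2 : ((Nat.factorial i : ℝ)) ≠ 0 := by exact_mod_cast Nat.factorial_ne_zero i
    rcases lt_trichotomy i n with h | h | h
    · rw [if_pos (by omega), if_pos (by omega), if_pos (by omega), if_pos (by omega)]
      obtain ⟨k, hk⟩ : ∃ k, n = i + 1 + k := ⟨n - (i+1), by omega⟩
      subst hk
      have hs1 : i + 1 + k + 2 - (i+1) = k+2 := by omega
      have hs2 : i + 1 + k + 1 - (i+1) = k+1 := by omega
      have hs3 : i + 1 + k + 1 - i = k+2 := by omega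
      have hs4 : i + 1 + k - (i+1) = k := by omega
      rw [hs1, hs2, hs3, hs4]
      obtain ⟨y, hy⟩ : ∃ y : ℝ, y = ((i+1+k : ℕ) : ℝ) + α := ⟨_, rfl⟩
      have e2 : ((i + 1 + k + 2 : ℕ) : ℝ) + α = y + 1 + 1 := by rw [hy]; push_cast; ring
      have e1 : ((i + 1 + k + 1 : ℕ) : ℝ) + α = y + 1 := by rw [hy]; push_cast; ring
      rw [e2, e1, ← hy]
      have key : (((i+1+k:ℕ):ℝ)+2) * gbinom (y+1+1) (k+2) =
          (2*((i+1+k:ℕ):ℝ)+3+α) * gbinom (y+1) (k+1) + ((i:ℝ)+1) * gbinom (y+1) (k+2)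
            - (((i+1+k:ℕ):ℝ)+1+α) * gbinom y k := by
        have hp1 := gbinom_pascal' (y + 1) (k+1)
        have hp2 := gbinom_pascal' y k
        have hs := gbinom_succ' y (k+1)
        push_cast at hs hy ⊢
        linear_combination ((i:ℝ)+(k:ℝ)+3) * hp1 - ((i:ℝ)+(k:ℝ)+2+α) * hp2 + hs
          + (gbinom y (k+1)) * hy
      rw [hfi, pow_succ]
      push_cast at key ⊢
      field_simp
      linear_combination (-1:ℝ) * key
    · subst h
      rw [if_pos (by omega), if_pos (by omega), if_pos (by omega), if_neg (by omega)]
      have hs1 : i + 2 - (i+1) = 1 := by omega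
      have hs2 : i + 1 - (i+1) = 0 := by omega
      have hs3 : i + 1 - i = 1 := by omega
      rw [hs1, hs2, hs3, gbinom_zero, gbinom_one, gbinom_one, hfi, pow_succ]
      push_cast
      field_simp
      ring
    · rcases Nat.eq_or_lt_of_le (by omega : n + 1 ≤ i) with h'' | h''
      · rw [if_pos (by omega), if_neg (by omega), if_pos (by omega), if_neg (by omega)]
        have hs1 : n + 2 - (i+1) = 0 := by omega
        have hs3 : n + 1 - i = 0 := by omega
        rw [hs1, hs3, gbinom_zero, gbinom_zero, hfi, pow_succ]
        have hi : (i : ℝ) = (n : ℝ) + 1 := by exact_mod_cast congrArg Nat.cast h''.symm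
        rw [hi]
        field_simp
        ring
      · rw [if_neg (by omega), if_neg (by omega), if_neg (by omega), if_neg (by omega)]
        ring

lemma laguerreP_zero (α : ℝ) : laguerreP α 0 = C 1 := by
  unfold laguerreP
  simp [gbinom_zero]

lemma gbinom_two (y : ℝ) : gbinom y 2 = y * (y - 1) / 2 := by
  show (∏ i ∈ Finset.range 2, (y - (i:ℝ))) / ((2).factorial : ℝ) = _
  rw [Finset.prod_range_succ, Finset.prod_range_one]
  norm_num

lemma laguerreP_one (α : ℝ) : laguerreP α 1 = C (1+α) - X := by
  unfold laguerreP
  rw [Finset.sum_range_succ, Finset.sum_range_one]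
  norm_num [gbinom_zero, gbinom_one]
  ring

lemma laguerreP_two (α : ℝ) :
    laguerreP α 2 = C ((α+1)*(α+2)/2) - C (α+2) * X + C (1/2) * X^2 := by
  unfold laguerreP
  rw [Finset.sum_range_succ, Finset.sum_range_succ, Finset.sum_range_one]
  norm_num [gbinom_zero, gbinom_one, gbinom_two]
  have e1 : (2 + α) * (2 + α - 1) / 2 = (α+1)*(α+2)/2 := by ring
  rw [e1]
  ring

lemma laguerreZ_nonneg (α : ℝ) {m : ℤ} (h : 0 ≤ m) :
    laguerreZ α m = laguerreP α m.toNat := if_neg (not_lt.2 h)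

lemma laguerreZ_neg (α : ℝ) (m : ℤ) (h : m < 0) : laguerreZ α m = 0 := if_pos h

lemma recA_int (α : ℝ) (m : ℤ) :
    C ((m:ℝ)+1) * laguerreZ α (m+1)
      = (C (2*(m:ℝ)+1+α) - X) * laguerreZ α m - C ((m:ℝ)+α) * laguerreZ α (m-1) := by
  rcases lt_trichotomy m 0 with h | h | h
  · rcases eq_or_lt_of_le (by omega : m ≤ -1) with h1 | h1
    · subst h1
      rw [laguerreZ_neg α _ (by norm_num : (-1:ℤ) - 1 < 0),
          laguerreZ_neg α _ (by norm_num : (-1:ℤ) < 0),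
          laguerreZ_nonneg α (by norm_num : (0:ℤ) ≤ -1 + 1)]
      norm_num
    · rw [laguerreZ_neg α _ (by omega), laguerreZ_neg α _ (by omega),
        laguerreZ_neg α _ (by omega)]
      simp
  · subst h
    rw [laguerreZ_neg α _ (by norm_num : (0:ℤ) - 1 < 0),
        laguerreZ_nonneg α (by norm_num : (0:ℤ) ≤ 0 + 1),
        laguerreZ_nonneg α (le_refl (0:ℤ))]
    have e1 : ((0:ℤ)+1).toNat = 1 := by norm_num
    have e2 : ((0:ℤ)).toNat = 0 := by norm_num
    rw [e1, e2, laguerreP_one, laguerreP_zero]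
    push_cast
    ring
  · obtain ⟨k, hk⟩ : ∃ k : ℕ, m = (k:ℤ) + 1 := ⟨(m-1).toNat, by omega⟩
    subst hk
    rw [laguerreZ_nonneg α (by omega), laguerreZ_nonneg α (by omega),
        laguerreZ_nonneg α (by omega)]
    have e1 : ((k:ℤ)+1+1).toNat = k + 2 := by omega
    have e2 : ((k:ℤ)+1).toNat = k + 1 := by omega
    have e3 : ((k:ℤ)+1-1).toNat = k := by omega
    rw [e1, e2, e3]
    have h := recA_nat α k
    push_cast
    linear_combination h

lemma recB_int (α : ℝ) (m : ℤ) :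
    derivative (laguerreZ α m)
      = derivative (laguerreZ α (m-1)) - laguerreZ α (m-1) := by
  rcases lt_trichotomy m 0 with h | h | h
  · rw [laguerreZ_neg α _ (by omega), laguerreZ_neg α _ (by omega)]
    simp
  · subst h
    rw [laguerreZ_neg α _ (by norm_num : (0:ℤ) - 1 < 0),
        laguerreZ_nonneg α (le_refl (0:ℤ))]
    have e2 : ((0:ℤ)).toNat = 0 := by norm_num
    rw [e2, laguerreP_zero]
    simp
  · obtain ⟨k, hk⟩ : ∃ k : ℕ, m = (k:ℤ) + 1 := ⟨(m-1).toNat, by omega⟩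
    subst hk
    rw [laguerreZ_nonneg α (by omega), laguerreZ_nonneg α (by omega)]
    have e2 : ((k:ℤ)+1).toNat = k + 1 := by omega
    have e3 : ((k:ℤ)+1-1).toNat = k := by omega
    rw [e2, e3]
    exact recB_nat α k

lemma recC_int (α : ℝ) (m : ℤ) :
    X * derivative (laguerreZ α m)
      = C (m:ℝ) * laguerreZ α m - C ((m:ℝ)+α) * laguerreZ α (m-1) := by
  have hdA := congrArg derivative (recA_int α m)
  simp only [derivative_mul, derivative_C, derivative_sub, derivative_X, zero_mul,
    zero_add, one_mul] at hdA
  have hB1 := recB_int α (m+1)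
  rw [show (m+1-1 : ℤ) = m by ring] at hB1
  have hB0 := recB_int α m
  simp only [map_add, map_mul, map_one, map_sub, map_ofNat] at hdA ⊢
  linear_combination hdA - (C (m:ℝ) + 1) * hB1 + (C (m:ℝ) + C α) * hB0

lemma excLag12_eq (α : ℝ) (m : ℤ) (x : ℝ) :
    excLag12 α m x =
      -(laguerreZ α m).eval x - ((1+α) - x) * (derivative (laguerreZ α m)).eval x
        + (-(x^2)/2 + (1+α)*x - (α+1)*(α+2)/2)
          * (derivative (derivative (laguerreZ α m))).eval x := by
  unfold excLag12
  rw [Matrix.det_fin_three, laguerreP_one, laguerreP_two]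
  simp [derivative_sub, derivative_add, derivative_mul, derivative_C, derivative_X,
    derivative_X_pow, derivative_one, eval_add, eval_sub, eval_mul, eval_C, eval_X,
    eval_pow, eval_one, eval_neg]
  ring

set_option maxHeartbeats 4000000 in
theorem excLaguerre_seven_term_recurrence (α : ℝ) (n : ℕ) (x : ℝ) :
    -(((n : ℝ) + α) * ((n : ℝ) + α - 1) * ((n : ℝ) + α - 2) / 6)
          * excLag12 α ((n : ℤ) - 3) x
      + ((n : ℝ) + α) * ((n : ℝ) + α - 1) * ((n : ℝ) - 2) * excLag12 α ((n : ℤ) - 2) x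
      - ((n : ℝ) + α) * (5 * (n : ℝ) + α - 9) * ((n : ℝ) - 1) / 2
          * excLag12 α ((n : ℤ) - 1) x
      + (10 * (n : ℝ) ^ 3 / 3 - (8 - 2 * α) * (n : ℝ) ^ 2 - (4 * α - 8 / 3) * (n : ℝ)
            + α ^ 3 / 6 + α ^ 2 + 11 * α / 6 + 1) * excLag12 α (n : ℤ) x
      - (5 * (n : ℝ) + α - 4) * ((n : ℝ) + 1) * ((n : ℝ) - 2) / 2
          * excLag12 α ((n : ℤ) + 1) x
      + ((n : ℝ) - 1) * ((n : ℝ) ^ 2 - 4) * excLag12 α ((n : ℤ) + 2) x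
      - ((n : ℝ) + 3) * ((n : ℝ) - 1) * ((n : ℝ) - 2) / 6 * excLag12 α ((n : ℤ) + 3) x
    = x * (x ^ 2 - 3 * x * (α + 1) + 3 * (α + 1) * (α + 2)) / 6 * excLag12 α (n : ℤ) x := by
  have EA : ∀ m : ℤ, ((m:ℝ)+1) * (laguerreZ α (m+1)).eval x
      = (2*(m:ℝ)+1+α-x) * (laguerreZ α m).eval x
        - ((m:ℝ)+α) * (laguerreZ α (m-1)).eval x := by
    intro m
    have h := congrArg (eval x) (recA_int α m)
    simp only [eval_mul, eval_sub, eval_C, eval_X] at h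
    exact h
  have EB : ∀ m : ℤ, (derivative (laguerreZ α m)).eval x
      = (derivative (laguerreZ α (m-1))).eval x - (laguerreZ α (m-1)).eval x := by
    intro m
    have h := congrArg (eval x) (recB_int α m)
    simp only [eval_sub] at h
    exact h
  have EBp : ∀ m : ℤ, (derivative (derivative (laguerreZ α m))).eval x
      = (derivative (derivative (laguerreZ α (m-1)))).eval x
        - (derivative (laguerreZ α (m-1))).eval x := by
    intro m
    have h := congrArg (eval x) (congrArg derivative (recB_int α m))
    simp only [derivative_sub, eval_sub] at h
    exact h
  have EC : ∀ m : ℤ, x * (derivative (laguerreZ α m)).eval x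
      = (m:ℝ) * (laguerreZ α m).eval x - ((m:ℝ)+α) * (laguerreZ α (m-1)).eval x := by
    intro m
    have h := congrArg (eval x) (recC_int α m)
    simp only [eval_mul, eval_sub, eval_C, eval_X] at h
    exact h
  have ECp : ∀ m : ℤ, (derivative (laguerreZ α m)).eval x
        + x * (derivative (derivative (laguerreZ α m))).eval x
      = (m:ℝ) * (derivative (laguerreZ α m)).eval x
        - ((m:ℝ)+α) * (derivative (laguerreZ α (m-1))).eval x := by
    intro m
    have h := congrArg (eval x) (congrArg derivative (recC_int α m))
    simp only [derivative_mul, derivative_sub, derivative_C, derivative_X, one_mul,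
      zero_mul, eval_add, eval_mul, eval_sub, eval_C, eval_X, eval_zero, zero_add, add_zero] at h
    exact h
  rw [excLag12_eq, excLag12_eq, excLag12_eq, excLag12_eq, excLag12_eq, excLag12_eq,
    excLag12_eq]
  have hAm1 := EA ((n:ℤ) - 1)
  rw [show ((n:ℤ) - 1 + 1 : ℤ) = (n:ℤ) by ring] at hAm1
  rw [show ((n:ℤ) - 1 - 1 : ℤ) = (n:ℤ) - 2 by ring] at hAm1
  push_cast at hAm1
  have hAm2 := EA ((n:ℤ) - 2)
  rw [show ((n:ℤ) - 2 + 1 : ℤ) = (n:ℤ) - 1 by ring] at hAm2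
  rw [show ((n:ℤ) - 2 - 1 : ℤ) = (n:ℤ) - 3 by ring] at hAm2
  push_cast at hAm2
  have hAm3 := EA ((n:ℤ) - 3)
  rw [show ((n:ℤ) - 3 + 1 : ℤ) = (n:ℤ) - 2 by ring] at hAm3
  rw [show ((n:ℤ) - 3 - 1 : ℤ) = (n:ℤ) - 4 by ring] at hAm3
  push_cast at hAm3
  have hAm4 := EA ((n:ℤ) - 4)
  rw [show ((n:ℤ) - 4 + 1 : ℤ) = (n:ℤ) - 3 by ring] at hAm4
  rw [show ((n:ℤ) - 4 - 1 : ℤ) = (n:ℤ) - 5 by ring] at hAm4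
  push_cast at hAm4
  have hAp0 := EA ((n:ℤ))
  push_cast at hAp0
  have hAp1 := EA ((n:ℤ) + 1)
  rw [show ((n:ℤ) + 1 + 1 : ℤ) = (n:ℤ) + 2 by ring] at hAp1
  rw [show ((n:ℤ) + 1 - 1 : ℤ) = (n:ℤ) by ring] at hAp1
  push_cast at hAp1
  have hAp2 := EA ((n:ℤ) + 2)
  rw [show ((n:ℤ) + 2 + 1 : ℤ) = (n:ℤ) + 3 by ring] at hAp2
  rw [show ((n:ℤ) + 2 - 1 : ℤ) = (n:ℤ) + 1 by ring] at hAp2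
  push_cast at hAp2
  have hBm1 := EB ((n:ℤ) - 1)
  rw [show ((n:ℤ) - 1 - 1 : ℤ) = (n:ℤ) - 2 by ring] at hBm1
  push_cast at hBm1
  have hBm2 := EB ((n:ℤ) - 2)
  rw [show ((n:ℤ) - 2 - 1 : ℤ) = (n:ℤ) - 3 by ring] at hBm2
  push_cast at hBm2
  have hBm3 := EB ((n:ℤ) - 3)
  rw [show ((n:ℤ) - 3 - 1 : ℤ) = (n:ℤ) - 4 by ring] at hBm3
  push_cast at hBm3
  have hBp0 := EB ((n:ℤ))
  push_cast at hBp0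
  have hBp1 := EB ((n:ℤ) + 1)
  rw [show ((n:ℤ) + 1 - 1 : ℤ) = (n:ℤ) by ring] at hBp1
  push_cast at hBp1
  have hBp2 := EB ((n:ℤ) + 2)
  rw [show ((n:ℤ) + 2 - 1 : ℤ) = (n:ℤ) + 1 by ring] at hBp2
  push_cast at hBp2
  have hBp3 := EB ((n:ℤ) + 3)
  rw [show ((n:ℤ) + 3 - 1 : ℤ) = (n:ℤ) + 2 by ring] at hBp3
  push_cast at hBp3
  have hBpm1 := EBp ((n:ℤ) - 1)
  rw [show ((n:ℤ) - 1 - 1 : ℤ) = (n:ℤ) - 2 by ring] at hBpm1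
  push_cast at hBpm1
  have hBpm2 := EBp ((n:ℤ) - 2)
  rw [show ((n:ℤ) - 2 - 1 : ℤ) = (n:ℤ) - 3 by ring] at hBpm2
  push_cast at hBpm2
  have hBpp0 := EBp ((n:ℤ))
  push_cast at hBpp0
  have hBpp1 := EBp ((n:ℤ) + 1)
  rw [show ((n:ℤ) + 1 - 1 : ℤ) = (n:ℤ) by ring] at hBpp1
  push_cast at hBpp1
  have hBpp2 := EBp ((n:ℤ) + 2)
  rw [show ((n:ℤ) + 2 - 1 : ℤ) = (n:ℤ) + 1 by ring] at hBpp2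
  push_cast at hBpp2
  have hBpp3 := EBp ((n:ℤ) + 3)
  rw [show ((n:ℤ) + 3 - 1 : ℤ) = (n:ℤ) + 2 by ring] at hBpp3
  push_cast at hBpp3
  have hCm1 := EC ((n:ℤ) - 1)
  rw [show ((n:ℤ) - 1 - 1 : ℤ) = (n:ℤ) - 2 by ring] at hCm1
  push_cast at hCm1
  have hCm2 := EC ((n:ℤ) - 2)
  rw [show ((n:ℤ) - 2 - 1 : ℤ) = (n:ℤ) - 3 by ring] at hCm2
  push_cast at hCm2
  have hCm3 := EC ((n:ℤ) - 3)
  rw [show ((n:ℤ) - 3 - 1 : ℤ) = (n:ℤ) - 4 by ring] at hCm3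
  push_cast at hCm3
  have hCm4 := EC ((n:ℤ) - 4)
  rw [show ((n:ℤ) - 4 - 1 : ℤ) = (n:ℤ) - 5 by ring] at hCm4
  push_cast at hCm4
  have hCp0 := EC ((n:ℤ))
  push_cast at hCp0
  have hCp1 := EC ((n:ℤ) + 1)
  rw [show ((n:ℤ) + 1 - 1 : ℤ) = (n:ℤ) by ring] at hCp1
  push_cast at hCp1
  have hCp2 := EC ((n:ℤ) + 2)
  rw [show ((n:ℤ) + 2 - 1 : ℤ) = (n:ℤ) + 1 by ring] at hCp2
  push_cast at hCp2
  have hCp3 := EC ((n:ℤ) + 3)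
  rw [show ((n:ℤ) + 3 - 1 : ℤ) = (n:ℤ) + 2 by ring] at hCp3
  push_cast at hCp3
  have hCpm1 := ECp ((n:ℤ) - 1)
  rw [show ((n:ℤ) - 1 - 1 : ℤ) = (n:ℤ) - 2 by ring] at hCpm1
  push_cast at hCpm1
  have hCpm2 := ECp ((n:ℤ) - 2)
  rw [show ((n:ℤ) - 2 - 1 : ℤ) = (n:ℤ) - 3 by ring] at hCpm2
  push_cast at hCpm2
  have hCpm3 := ECp ((n:ℤ) - 3)
  rw [show ((n:ℤ) - 3 - 1 : ℤ) = (n:ℤ) - 4 by ring] at hCpm3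
  push_cast at hCpm3
  have hCpp0 := ECp ((n:ℤ))
  push_cast at hCpp0
  have hCpp1 := ECp ((n:ℤ) + 1)
  rw [show ((n:ℤ) + 1 - 1 : ℤ) = (n:ℤ) by ring] at hCpp1
  push_cast at hCpp1
  have hCpp2 := ECp ((n:ℤ) + 2)
  rw [show ((n:ℤ) + 2 - 1 : ℤ) = (n:ℤ) + 1 by ring] at hCpp2
  push_cast at hCpp2
  have hCpp3 := ECp ((n:ℤ) + 3)
  rw [show ((n:ℤ) + 3 - 1 : ℤ) = (n:ℤ) + 2 by ring] at hCpp3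
  push_cast at hCpp3
  linear_combination (norm := ring1)
    (((-25:ℝ)/12) * (n:ℝ) * x + ((-25:ℝ)/12) * α * x + ((-13:ℝ)/12) * α^2 * x + ((1:ℝ)/3) * (n:ℝ) * x^2 + ((1:ℝ)/3) * α * x^2 + ((-83:ℝ)/12) * (n:ℝ) * α + ((31:ℝ)/6) * α^2 + ((-13:ℝ)/4) * (n:ℝ) * α^2 + ((5:ℝ)/4) * α^3 + ((29:ℝ)/4) * (n:ℝ) + ((29:ℝ)/4) * α + ((-145:ℝ)/12) * (n:ℝ)^2 + (3:ℝ) * (n:ℝ)^2 * α + ((25:ℝ)/12) * (n:ℝ)^2 * x + ((15:ℝ)/2) * (n:ℝ)^3 + ((-1:ℝ)/6) * (n:ℝ)^2 * x^2 + ((-1:ℝ)/6) * (n:ℝ) * α * x^2 + ((1:ℝ)/12) * (n:ℝ)^2 * α * x + ((7:ℝ)/12) * (n:ℝ) * α^2 * x + ((1:ℝ)/12) * (n:ℝ)^2 * α^2 + ((-3:ℝ)/4) * (n:ℝ) * α^3 + (1:ℝ) * (n:ℝ) * α * x + ((-1:ℝ)/2) * (n:ℝ)^3 * x + ((-5:ℝ)/6)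 * (n:ℝ)^3 * α + ((-5:ℝ)/3) * (n:ℝ)^4) * hAm1
    + ((12:ℝ) * (n:ℝ)^2 + ((-79:ℝ)/12) * (n:ℝ) + ((47:ℝ)/3) * (n:ℝ) * α + ((-79:ℝ)/12) * α + ((-25:ℝ)/3) * (n:ℝ)^2 * α + ((3:ℝ)/4) * (n:ℝ) * α^2 + ((29:ℝ)/12) * α^3 + ((-4:ℝ)/3) * (n:ℝ)^2 * x + (1:ℝ) * (n:ℝ) * x + (-2:ℝ) * (n:ℝ) * α * x + (1:ℝ) * α * x + ((-2:ℝ)/3) * α^2 * x + ((-20:ℝ)/3) * (n:ℝ)^3 + ((11:ℝ)/3) * α^2 + ((1:ℝ)/12) * (n:ℝ)^2 * x^2 + ((-1:ℝ)/12) * (n:ℝ) * x^2 + ((1:ℝ)/6) * (n:ℝ) * α * x^2 + ((-1:ℝ)/12) * α * x^2 + ((1:ℝ)/12) * α^2 * x^2 + ((1:ℝ)/3) * (n:ℝ)^2 * α * x + ((-1:ℝ)/3) * (n:ℝ) * α^2 * x + ((-1:ℝ)/3) * α^3 * x + ((1:ℝ)/12) * (n:ℝ)^2 * α^2 + ((1:ℝ)/6)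 * (n:ℝ) * α^3 + ((1:ℝ)/2) * α^4 + ((1:ℝ)/3) * (n:ℝ)^3 * x + ((5:ℝ)/3) * (n:ℝ)^3 * α + ((5:ℝ)/4) * (n:ℝ)^4) * hAm2
    + (((35:ℝ)/12) * (n:ℝ)^3 + ((-21:ℝ)/4) * (n:ℝ)^2 + ((13:ℝ)/2) * (n:ℝ)^2 * α + ((17:ℝ)/6) * (n:ℝ) + (-9:ℝ) * (n:ℝ) * α + ((17:ℝ)/4) * (n:ℝ) * α^2 + ((17:ℝ)/6) * α + ((-15:ℝ)/4) * α^2 + ((2:ℝ)/3) * α^3 + ((-1:ℝ)/12) * (n:ℝ)^3 * x + ((1:ℝ)/4) * (n:ℝ)^2 * x + ((-1:ℝ)/4) * (n:ℝ)^2 * α * x + ((-1:ℝ)/6) * (n:ℝ) * x + ((1:ℝ)/2) * (n:ℝ) * α * x + ((-1:ℝ)/4) * (n:ℝ) * α^2 * x + ((-1:ℝ)/6) * α * x + ((1:ℝ)/4) * α^2 * x + ((-1:ℝ)/12) * α^3 * x + ((-5:ℝ)/4) * (n:ℝ)^3 * α + ((-3:ℝ)/4) * (n:ℝ)^2 * α^2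 + ((1:ℝ)/4) * (n:ℝ) * α^3 + ((1:ℝ)/4) * α^4 + ((-1:ℝ)/2) * (n:ℝ)^4) * hAm3
    + (((1:ℝ)/12) * (n:ℝ)^4 + ((-1:ℝ)/2) * (n:ℝ)^3 + ((1:ℝ)/3) * (n:ℝ)^3 * α + ((11:ℝ)/12) * (n:ℝ)^2 + ((-3:ℝ)/2) * (n:ℝ)^2 * α + ((1:ℝ)/2) * (n:ℝ)^2 * α^2 + ((-1:ℝ)/2) * (n:ℝ) + ((11:ℝ)/6) * (n:ℝ) * α + ((-3:ℝ)/2) * (n:ℝ) * α^2 + ((1:ℝ)/3) * (n:ℝ) * α^3 + ((-1:ℝ)/2) * α + ((11:ℝ)/12) * α^2 + ((-1:ℝ)/2) * α^3 + ((1:ℝ)/12) * α^4) * hAm4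
    + (((1:ℝ)/6) * x^2 + ((-1:ℝ)/3) * α * x + ((-1:ℝ)/3) * x + (1:ℝ) * α + ((5:ℝ)/6) + ((7:ℝ)/6) * (n:ℝ) * x + ((1:ℝ)/2) * (n:ℝ) * α * x + ((-1:ℝ)/4) * (n:ℝ) * x^2 + ((-3:ℝ)/2) * (n:ℝ) * α + ((-25:ℝ)/12) * (n:ℝ) + ((25:ℝ)/6) * (n:ℝ)^2 + ((1:ℝ)/2) * (n:ℝ)^2 * α + ((-7:ℝ)/6) * (n:ℝ)^2 * x + ((-25:ℝ)/6) * (n:ℝ)^3 + ((1:ℝ)/12) * (n:ℝ)^2 * x^2 + ((-1:ℝ)/6) * (n:ℝ)^2 * α * x + ((1:ℝ)/3) * (n:ℝ)^3 * x + ((1:ℝ)/6) * α^2 + ((-1:ℝ)/4) * (n:ℝ) * α^2 + ((5:ℝ)/4) * (n:ℝ)^4 + ((1:ℝ)/12) * (n:ℝ)^2 * α^2) * hAp0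
    + (((-1:ℝ)/6) * x + ((1:ℝ)/6) * α + ((-11:ℝ)/12) * (n:ℝ) + ((-1:ℝ)/6) + ((2:ℝ)/3) * (n:ℝ)^2 + ((-1:ℝ)/6) * (n:ℝ)^2 * α + ((1:ℝ)/6) * (n:ℝ)^2 * x + ((11:ℝ)/12) * (n:ℝ)^3 + ((-1:ℝ)/12) * (n:ℝ) * α + ((1:ℝ)/12) * (n:ℝ) * x + ((-1:ℝ)/12) * (n:ℝ)^3 * x + ((1:ℝ)/12) * (n:ℝ)^3 * α + ((-1:ℝ)/2) * (n:ℝ)^4) * hAp1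
    + (((1:ℝ)/3) + ((-5:ℝ)/12) * (n:ℝ)^2 + ((1:ℝ)/12) * (n:ℝ)^4) * hAp2
    + (((71:ℝ)/6) * (n:ℝ)^3 + ((15:ℝ)/2) * (n:ℝ)^3 * α + ((-37:ℝ)/2) * (n:ℝ)^2 + ((-1:ℝ)/2) * (n:ℝ)^2 * α + ((33:ℝ)/2) * (n:ℝ)^2 * α^2 + (-16:ℝ) * (n:ℝ) * α + ((-127:ℝ)/6) * (n:ℝ) * α^2 + ((55:ℝ)/6) * (n:ℝ) + (4:ℝ) * (n:ℝ) * α^3 + ((5:ℝ)/2) * α^2 + ((-53:ℝ)/6) * α^3 + ((55:ℝ)/6) * α + ((-5:ℝ)/2) * (n:ℝ)^4 + ((-5:ℝ)/2) * (n:ℝ)^4 * α + ((-13:ℝ)/3) * (n:ℝ)^3 * α^2 + ((-3:ℝ)/2) * (n:ℝ)^2 * α^3 + ((-5:ℝ)/2) * α^4 + ((-1:ℝ)/3) * α^5) * hBm1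
    + (((-11:ℝ)/2) * (n:ℝ)^3 + ((-11:ℝ)/4) * (n:ℝ)^3 * α + ((19:ℝ)/2) * (n:ℝ)^2 + ((-13:ℝ)/4) * (n:ℝ)^2 * α + ((-21:ℝ)/2) * (n:ℝ)^2 * α^2 + ((23:ℝ)/2) * (n:ℝ) * α + ((15:ℝ)/2) * (n:ℝ) * α^2 + (-5:ℝ) * (n:ℝ) + ((-35:ℝ)/4) * (n:ℝ) * α^3 + ((21:ℝ)/4) * α^3 + (-5:ℝ) * α + (1:ℝ) * (n:ℝ)^4 + (1:ℝ) * (n:ℝ)^4 * α + ((11:ℝ)/4) * (n:ℝ)^3 * α^2 + ((9:ℝ)/4) * (n:ℝ)^2 * α^3 + ((1:ℝ)/4) * (n:ℝ) * α^4 + (2:ℝ) * α^2 + (-2:ℝ) * α^4 + ((-1:ℝ)/4) * α^5) * hBm2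
    + ((1:ℝ) * (n:ℝ)^3 + ((1:ℝ)/3) * (n:ℝ)^3 * α + (2:ℝ) * (n:ℝ)^2 * α^2 + ((-11:ℝ)/6) * (n:ℝ)^2 + ((-2:ℝ)/3) * (n:ℝ) * α^2 + ((7:ℝ)/3) * (n:ℝ) * α^3 + ((-8:ℝ)/3) * (n:ℝ) * α + (1:ℝ) * (n:ℝ) + ((-5:ℝ)/6) * α^3 + ((5:ℝ)/6) * α^4 + ((-5:ℝ)/6) * α^2 + (1:ℝ) * α + ((-1:ℝ)/6) * (n:ℝ)^4 + ((-1:ℝ)/6) * (n:ℝ)^4 * α + ((-2:ℝ)/3) * (n:ℝ)^3 * α^2 + ((7:ℝ)/6) * (n:ℝ)^2 * α + (-1:ℝ) * (n:ℝ)^2 * α^3 + ((-2:ℝ)/3) * (n:ℝ) * α^4 + ((-1:ℝ)/6) * α^5) * hBm3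
    + (((-37:ℝ)/3) * (n:ℝ)^3 + ((-55:ℝ)/6) * (n:ℝ)^3 * α + ((53:ℝ)/12) * (n:ℝ)^2 * α + ((-19:ℝ)/2) * (n:ℝ)^2 * α^2 + ((85:ℝ)/6) * (n:ℝ)^2 + ((-31:ℝ)/6) * (n:ℝ) + ((21:ℝ)/4) * (n:ℝ) * α + ((149:ℝ)/12) * (n:ℝ) * α^2 + ((-13:ℝ)/3) * α^3 + ((-7:ℝ)/12) * α^4 + ((-107:ℝ)/12) * α^2 + ((-31:ℝ)/6) * α + ((10:ℝ)/3) * (n:ℝ)^4 + ((10:ℝ)/3) * (n:ℝ)^4 * α + ((19:ℝ)/6) * (n:ℝ)^3 * α^2 + ((29:ℝ)/12) * (n:ℝ) * α^3 + ((5:ℝ)/12) * (n:ℝ) * α^4 + ((1:ℝ)/4) * (n:ℝ)^2 * α^3) * hBp0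
    + ((6:ℝ) * (n:ℝ)^3 + (5:ℝ) * (n:ℝ)^3 * α + ((-1:ℝ)/2) * (n:ℝ)^2 + (1:ℝ) * (n:ℝ)^2 * α + (-3:ℝ) * (n:ℝ) + ((-1:ℝ)/2) * (n:ℝ) * α + ((3:ℝ)/2) * (n:ℝ)^2 * α^2 + ((5:ℝ)/2) * (n:ℝ) * α^2 + (-3:ℝ) * α + (-3:ℝ) * α^2 + ((-5:ℝ)/2) * (n:ℝ)^4 + ((-5:ℝ)/2) * (n:ℝ)^4 * α + (-1:ℝ) * (n:ℝ)^3 * α^2) * hBp1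
    + (((-5:ℝ)/6) * (n:ℝ)^3 + ((-3:ℝ)/4) * (n:ℝ)^3 * α + ((17:ℝ)/6) * (n:ℝ) + ((9:ℝ)/4) * (n:ℝ) * α + (-4:ℝ) * (n:ℝ)^2 + (-4:ℝ) * (n:ℝ)^2 * α + (1:ℝ) * (n:ℝ)^4 + (1:ℝ) * (n:ℝ)^4 * α + ((1:ℝ)/12) * (n:ℝ)^3 * α^2 + ((-7:ℝ)/12) * (n:ℝ) * α^2 + (1:ℝ) + ((3:ℝ)/2) * α + ((1:ℝ)/2) * α^2) * hBp2
    + (((-1:ℝ)/6) * (n:ℝ)^3 + ((-1:ℝ)/6) * (n:ℝ)^3 * α + ((1:ℝ)/6) * (n:ℝ) + ((1:ℝ)/6) * (n:ℝ) * α + (-1:ℝ) + (-1:ℝ) * α + ((-1:ℝ)/6) * (n:ℝ)^4 + ((-1:ℝ)/6) * (n:ℝ)^4 * α + ((7:ℝ)/6) * (n:ℝ)^2 + ((7:ℝ)/6) * (n:ℝ)^2 * α) * hBp3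
    + (((5:ℝ)/12) * (n:ℝ)^3 * α^2 + ((5:ℝ)/4) * (n:ℝ)^3 * α + ((5:ℝ)/6) * (n:ℝ)^3 + (1:ℝ) * (n:ℝ)^2 * α^2 + ((-9:ℝ)/4) * (n:ℝ)^2 * α + ((-5:ℝ)/2) * (n:ℝ)^2 + ((3:ℝ)/4) * (n:ℝ)^2 * α^3 + ((-5:ℝ)/4) * (n:ℝ) * α^3 + ((-14:ℝ)/3) * (n:ℝ) * α^2 + ((-3:ℝ)/2) * (n:ℝ) * α + ((5:ℝ)/3) * (n:ℝ) + ((1:ℝ)/4) * (n:ℝ) * α^4 + (-1:ℝ) * α^4 + ((-19:ℝ)/12) * α^3 + (1:ℝ) * α^2 + ((5:ℝ)/3) * α + ((-1:ℝ)/12) * α^5) * hBpm1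
    + (((-1:ℝ)/12) * (n:ℝ)^3 * α^2 + ((-1:ℝ)/4) * (n:ℝ)^3 * α + ((-1:ℝ)/6) * (n:ℝ)^3 + ((-1:ℝ)/2) * (n:ℝ)^2 * α^2 + ((1:ℝ)/4) * (n:ℝ)^2 * α + ((1:ℝ)/2) * (n:ℝ)^2 + ((-1:ℝ)/4) * (n:ℝ)^2 * α^3 + ((-1:ℝ)/4) * (n:ℝ) * α^3 + ((5:ℝ)/6) * (n:ℝ) * α^2 + ((1:ℝ)/2) * (n:ℝ) * α + ((-1:ℝ)/3) * (n:ℝ) + ((-1:ℝ)/4) * (n:ℝ) * α^4 + ((5:ℝ)/12) * α^3 + ((-1:ℝ)/3) * α + ((-1:ℝ)/12) * α^5) * hBpm2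
    + (((-5:ℝ)/6) * (n:ℝ)^3 * α^2 + ((-5:ℝ)/2) * (n:ℝ)^3 * α + ((-5:ℝ)/3) * (n:ℝ)^3 + ((-3:ℝ)/4) * (n:ℝ)^2 * α^3 + ((21:ℝ)/4) * (n:ℝ)^2 * α + ((9:ℝ)/2) * (n:ℝ)^2 + ((23:ℝ)/6) * (n:ℝ) * α^2 + ((-17:ℝ)/6) * (n:ℝ) + ((7:ℝ)/4) * (n:ℝ) * α^3 + ((-1:ℝ)/12) * α^5 + ((-3:ℝ)/4) * α^4 + ((-37:ℝ)/12) * α^3 + ((-21:ℝ)/4) * α^2 + ((-17:ℝ)/6) * α + ((-3:ℝ)/4) * (n:ℝ) * α) * hBpp0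
    + (((5:ℝ)/6) * (n:ℝ)^3 * α^2 + ((5:ℝ)/2) * (n:ℝ)^3 * α + ((5:ℝ)/3) * (n:ℝ)^3 + (-1:ℝ) * (n:ℝ)^2 * α^2 + ((-19:ℝ)/4) * (n:ℝ)^2 * α + ((-7:ℝ)/2) * (n:ℝ)^2 + ((-5:ℝ)/6) * (n:ℝ) * α^2 + ((-3:ℝ)/4) * (n:ℝ) * α + ((-1:ℝ)/6) * (n:ℝ) + ((1:ℝ)/4) * (n:ℝ)^2 * α^3 + ((-1:ℝ)/4) * (n:ℝ) * α^3 + ((-1:ℝ)/2) * α^3 + (-1:ℝ) * α^2 + ((1:ℝ)/2) * α + (1:ℝ)) * hBpp1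
    + (((-5:ℝ)/12) * (n:ℝ)^3 * α^2 + ((-5:ℝ)/4) * (n:ℝ)^3 * α + ((-5:ℝ)/6) * (n:ℝ)^3 + ((17:ℝ)/12) * (n:ℝ) * α^2 + ((17:ℝ)/4) * (n:ℝ) * α + ((17:ℝ)/6) * (n:ℝ) + ((1:ℝ)/2) * (n:ℝ)^2 * α^2 + ((3:ℝ)/2) * (n:ℝ)^2 * α + (1:ℝ) * (n:ℝ)^2 + ((-3:ℝ)/2) * α^2 + ((-9:ℝ)/2) * α + (-3:ℝ)) * hBpp2
    + (((1:ℝ)/12) * (n:ℝ)^3 * α^2 + ((1:ℝ)/4) * (n:ℝ)^3 * α + ((1:ℝ)/6) * (n:ℝ)^3 + ((-7:ℝ)/12) * (n:ℝ) * α^2 + ((-7:ℝ)/4) * (n:ℝ) * α + ((-7:ℝ)/6) * (n:ℝ) + ((1:ℝ)/2) * α^2 + ((3:ℝ)/2) * α + (1:ℝ)) * hBpp3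
    + (((-25:ℝ)/2) * (n:ℝ)^3 + ((211:ℝ)/12) * (n:ℝ)^2 + ((-63:ℝ)/4) * (n:ℝ)^2 * α + ((93:ℝ)/4) * (n:ℝ) * α + (-7:ℝ) * (n:ℝ) + ((1:ℝ)/4) * (n:ℝ) * α^2 + ((17:ℝ)/3) * α^2 + (-7:ℝ) * α + ((35:ℝ)/12) * (n:ℝ)^4 + ((25:ℝ)/6) * (n:ℝ)^3 * α + ((5:ℝ)/4) * (n:ℝ)^2 * α^2 + ((5:ℝ)/6) * (n:ℝ) * α^3 + ((5:ℝ)/6) * α^4 + ((7:ℝ)/2) * α^3 + ((-1:ℝ)/12) * (n:ℝ) * x^3 + ((-1:ℝ)/12) * α * x^3 + ((5:ℝ)/12) * (n:ℝ) * x^2 + ((5:ℝ)/12) * α * x^2 + ((5:ℝ)/12) * (n:ℝ) * α * x^2 + ((5:ℝ)/12) * α^2 * x^2 + ((-5:ℝ)/6) * (n:ℝ) * α^2 * x + ((-5:ℝ)/6) * α^3 * x + (-2:ℝ) * (n:ℝ) * α * x + (-2:ℝ) * α^2 * x + ((-7:ℝ)/6) * (n:ℝ) * x + ((-7:ℝ)/6)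 * α * x) * hCm1
    + (((35:ℝ)/4) * (n:ℝ)^3 + ((-57:ℝ)/4) * (n:ℝ)^2 + ((65:ℝ)/4) * (n:ℝ)^2 * α + ((-87:ℝ)/4) * (n:ℝ) * α + ((29:ℝ)/4) * (n:ℝ) + ((31:ℝ)/4) * (n:ℝ) * α^2 + ((-15:ℝ)/2) * α^2 + ((29:ℝ)/4) * α + ((-7:ℝ)/4) * (n:ℝ)^4 + ((-15:ℝ)/4) * (n:ℝ)^3 * α + ((-9:ℝ)/4) * (n:ℝ)^2 * α^2 + ((-1:ℝ)/4) * (n:ℝ) * α^3 + ((1:ℝ)/4) * α^3) * hCm2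
    + (((-13:ℝ)/4) * (n:ℝ)^3 + (-8:ℝ) * (n:ℝ)^2 * α + ((17:ℝ)/3) * (n:ℝ)^2 + ((-25:ℝ)/4) * (n:ℝ) * α^2 + ((61:ℝ)/6) * (n:ℝ) * α + (-3:ℝ) * (n:ℝ) + ((-3:ℝ)/2) * α^3 + ((9:ℝ)/2) * α^2 + (-3:ℝ) * α + ((7:ℝ)/12) * (n:ℝ)^4 + ((7:ℝ)/4) * (n:ℝ)^3 * α + ((7:ℝ)/4) * (n:ℝ)^2 * α^2 + ((7:ℝ)/12) * (n:ℝ) * α^3) * hCm3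
    + (((-1:ℝ)/12) * (n:ℝ)^4 + ((1:ℝ)/2) * (n:ℝ)^3 + ((-1:ℝ)/3) * (n:ℝ)^3 * α + ((3:ℝ)/2) * (n:ℝ)^2 * α + ((-1:ℝ)/2) * (n:ℝ)^2 * α^2 + ((-11:ℝ)/12) * (n:ℝ)^2 + ((3:ℝ)/2) * (n:ℝ) * α^2 + ((-1:ℝ)/3) * (n:ℝ) * α^3 + ((-11:ℝ)/6) * (n:ℝ) * α + ((1:ℝ)/2) * (n:ℝ) + ((1:ℝ)/2) * α^3 + ((-1:ℝ)/12) * α^4 + ((-11:ℝ)/12) * α^2 + ((1:ℝ)/2) * α) * hCm4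
    + ((10:ℝ) * (n:ℝ)^3 + ((29:ℝ)/4) * (n:ℝ)^2 * α + ((-115:ℝ)/12) * (n:ℝ)^2 + ((3:ℝ)/2) * (n:ℝ) + ((-101:ℝ)/12) * (n:ℝ) * α + ((3:ℝ)/2) * α^3 + (7:ℝ) * α^2 + ((15:ℝ)/2) * α + (2:ℝ) + ((13:ℝ)/12) * x^2 + ((13:ℝ)/12) * α * x^2 + ((-1:ℝ)/4) * x^3 + ((-9:ℝ)/2) * α * x + ((-11:ℝ)/6) * α^2 * x + ((-8:ℝ)/3) * x + ((-35:ℝ)/12) * (n:ℝ)^4 + ((-5:ℝ)/2) * (n:ℝ)^3 * α + ((-5:ℝ)/6) * (n:ℝ) * α^3 + ((-13:ℝ)/4) * (n:ℝ) * α^2 + ((1:ℝ)/12) * (n:ℝ) * x^3 + ((-5:ℝ)/12) * (n:ℝ) * x^2 + ((-5:ℝ)/12) * (n:ℝ) * α * x^2 + ((5:ℝ)/6) * (n:ℝ) * α^2 * x + (2:ℝ) * (n:ℝ) * α * x + ((7:ℝ)/6) * (n:ℝ) * x + ((-1:ℝ)/4) * (n:ℝ)^2 * α^2) * hCp0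
    + (((-17:ℝ)/4) * (n:ℝ)^3 + (3:ℝ) * (n:ℝ) + ((-5:ℝ)/4) * (n:ℝ)^2 * α + (-2:ℝ) * (n:ℝ) * α + (3:ℝ) * α + ((7:ℝ)/4) * (n:ℝ)^4 + ((3:ℝ)/4) * (n:ℝ)^3 * α) * hCp1
    + (((3:ℝ)/4) * (n:ℝ)^3 + ((-11:ℝ)/4) * (n:ℝ) + ((25:ℝ)/12) * (n:ℝ)^2 + ((1:ℝ)/2) + ((-7:ℝ)/12) * (n:ℝ)^4 + ((-1:ℝ)/12) * (n:ℝ)^3 * α + ((7:ℝ)/12) * (n:ℝ) * α + ((-1:ℝ)/2) * α) * hCp2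
    + (((1:ℝ)/2) * (n:ℝ) + ((1:ℝ)/12) * (n:ℝ)^4 + ((-7:ℝ)/12) * (n:ℝ)^2) * hCp3
    + (((5:ℝ)/4) * (n:ℝ)^3 * x + ((-5:ℝ)/2) * (n:ℝ)^3 + ((-5:ℝ)/2) * (n:ℝ)^3 * α + ((-7:ℝ)/2) * (n:ℝ)^2 * x + (7:ℝ) * (n:ℝ)^2 + (4:ℝ) * (n:ℝ)^2 * α + ((3:ℝ)/2) * (n:ℝ)^2 * α * x + (-3:ℝ) * (n:ℝ)^2 * α^2 + ((-15:ℝ)/4) * (n:ℝ) * α * x + (3:ℝ) * (n:ℝ) * α + (7:ℝ) * (n:ℝ) * α^2 + ((9:ℝ)/4) * (n:ℝ) * x + ((-9:ℝ)/2) * (n:ℝ) + ((1:ℝ)/4) * (n:ℝ) * α^2 * x + ((-1:ℝ)/2) * (n:ℝ) * α^3 + ((-1:ℝ)/4) * α^2 * x + (-4:ℝ) * α^2 + ((1:ℝ)/2) * α^3 + ((9:ℝ)/4) * α * x + ((-9:ℝ)/2) * α) * hCpm1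
    + (((-1:ℝ)/2) * (n:ℝ)^3 * x + (1:ℝ) * (n:ℝ)^3 + (1:ℝ) * (n:ℝ)^3 * α + ((3:ℝ)/2) * (n:ℝ)^2 * x + (-3:ℝ) * (n:ℝ)^2 + (-1:ℝ) * (n:ℝ)^2 * α + (-1:ℝ) * (n:ℝ)^2 * α * x + (2:ℝ) * (n:ℝ)^2 * α^2 + ((5:ℝ)/2) * (n:ℝ) * α * x + (-3:ℝ) * (n:ℝ) * α + (-4:ℝ) * (n:ℝ) * α^2 + (-1:ℝ) * (n:ℝ) * x + (2:ℝ) * (n:ℝ) + ((-1:ℝ)/2) * (n:ℝ) * α^2 * x + (1:ℝ) * (n:ℝ) * α^3 + (1:ℝ) * α^2 * x + (-2:ℝ) * α^3 + (-1:ℝ) * α * x + (2:ℝ) * α) * hCpm2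
    + (((1:ℝ)/12) * (n:ℝ)^3 * x + ((-1:ℝ)/6) * (n:ℝ)^3 + ((-1:ℝ)/6) * (n:ℝ)^3 * α + ((1:ℝ)/4) * (n:ℝ)^2 * α * x + ((-1:ℝ)/2) * (n:ℝ)^2 * α^2 + ((-1:ℝ)/4) * (n:ℝ)^2 * x + ((1:ℝ)/2) * (n:ℝ)^2 + ((1:ℝ)/4) * (n:ℝ) * α^2 * x + ((1:ℝ)/2) * (n:ℝ) * α^2 + ((-1:ℝ)/2) * (n:ℝ) * α^3 + ((-1:ℝ)/2) * (n:ℝ) * α * x + ((2:ℝ)/3) * (n:ℝ) * α + ((1:ℝ)/6) * (n:ℝ) * x + ((-1:ℝ)/3) * (n:ℝ) + ((1:ℝ)/12) * α^3 * x + ((1:ℝ)/3) * α^3 + ((-1:ℝ)/6) * α^4 + ((-1:ℝ)/4) * α^2 * x + ((1:ℝ)/6) * α^2 + ((1:ℝ)/6) * α * x + ((-1:ℝ)/3) * α) * hCpm3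
    + (((-5:ℝ)/3) * (n:ℝ)^3 * x + ((10:ℝ)/3) * (n:ℝ)^3 + ((10:ℝ)/3) * (n:ℝ)^3 * α + (-1:ℝ) * (n:ℝ)^2 * α * x + (-6:ℝ) * (n:ℝ)^2 * α + (2:ℝ) * (n:ℝ)^2 * α^2 + (4:ℝ) * (n:ℝ)^2 * x + (-8:ℝ) * (n:ℝ)^2 + ((-4:ℝ)/3) * (n:ℝ) * x + ((8:ℝ)/3) * (n:ℝ) + ((-4:ℝ)/3) * (n:ℝ) * α + (2:ℝ) * (n:ℝ) * α * x + (-4:ℝ) * (n:ℝ) * α^2 + ((-5:ℝ)/6) * α^3 * x + ((8:ℝ)/3) * α^3 + ((5:ℝ)/12) * α^4 + ((-7:ℝ)/2) * α^2 * x + ((73:ℝ)/12) * α^2 + ((-14:ℝ)/3) * α * x + ((35:ℝ)/6) * α + (-2:ℝ) * x + (2:ℝ) + ((1:ℝ)/12) * x^4 + ((-5:ℝ)/12) * x^3 + ((-5:ℝ)/12) * α * x^3 + ((5:ℝ)/6) * α^2 * x^2 + (2:ℝ) * α * x^2 + ((7:ℝ)/6) * x^2) * hCpp0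
    + (((5:ℝ)/4) * (n:ℝ)^3 * x + ((-5:ℝ)/2) * (n:ℝ)^3 + ((-5:ℝ)/2) * (n:ℝ)^3 * α + ((-9:ℝ)/4) * (n:ℝ)^2 * x + ((9:ℝ)/2) * (n:ℝ)^2 + (4:ℝ) * (n:ℝ)^2 * α + ((-3:ℝ)/2) * (n:ℝ) * x + (3:ℝ) * (n:ℝ) + ((7:ℝ)/2) * (n:ℝ) * α + ((1:ℝ)/4) * (n:ℝ)^2 * α * x + ((-1:ℝ)/2) * (n:ℝ)^2 * α^2 + ((-1:ℝ)/4) * (n:ℝ) * α * x + ((1:ℝ)/2) * (n:ℝ) * α^2 + ((-1:ℝ)/2) * α * x + (-3:ℝ) * α + (1:ℝ) * α^2 + (2:ℝ) * x + (-4:ℝ)) * hCpp1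
    + (((-1:ℝ)/2) * (n:ℝ)^3 * x + (1:ℝ) * (n:ℝ)^3 + (1:ℝ) * (n:ℝ)^3 * α + (2:ℝ) * (n:ℝ) * x + (-4:ℝ) * (n:ℝ) + (-4:ℝ) * (n:ℝ) * α + ((1:ℝ)/2) * (n:ℝ)^2 * x + (-1:ℝ) * (n:ℝ)^2 + (-1:ℝ) * (n:ℝ)^2 * α + (-2:ℝ) * x + (4:ℝ) + (4:ℝ) * α) * hCpp2
    + (((1:ℝ)/12) * (n:ℝ)^3 * x + ((-1:ℝ)/6) * (n:ℝ)^3 + ((-1:ℝ)/6) * (n:ℝ)^3 * α + ((-7:ℝ)/12) * (n:ℝ) * x + ((7:ℝ)/6) * (n:ℝ) + ((7:ℝ)/6) * (n:ℝ) * α + ((1:ℝ)/2) * x + (-1:ℝ) + (-1:ℝ) * α) * hCpp3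
end
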